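/- (Lemma 4.1: bound on the defect of the lattice Poisson kernel) Let L = 2^p with integer p ≥ 1, let n ≥ m ≥ 0 be integers, set ε = L^{−n} and R = L^{−(m−1)}, and let a ≥ 0. Let h : Ū_ε(R) → ℝ be the solution of the lattice Dirichlet problem on U_ε(R) with boundary data f ≡ 1 (so that h(x) is the total mass P^a_{U_ε(R)}(x, ∂U_ε(R)) of the lattice Poisson kernel). Then for every x ∈ U_ε(R): 0 ≤ 1 − h(x) ≤ a·R²/2. -/

import Mathlib

open scoped ENNReal BigOperators

namespace FRD

abbrev Pt (d : ℕ) := Fin d → ℝ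
abbrev Idx (d : ℕ) := Fin d → ℤ

variable {d : ℕ}

/-- The lattice point of `(εℤ)^d` with integer coordinates `k`. -/
noncomputable def toPt (ε : ℝ) (k : Idx d) : Pt d := fun i => ε * (k i : ℝ)

/-- The lattice `(εℤ)^d` as a subset of `ℝ^d`. -/
def latt (d : ℕ) (ε : ℝ) : Set (Pt d) := Set.range (toPt (d := d) ε)

/-- Signed unit direction: `e.1` is the coordinate, `e.2` the sign. -/
noncomputable def sdir (d : ℕ) (e : Fin d × Bool) : Pt d :=
  Pi.single e.1 (if e.2 then (1 : ℝ) else -1)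

/-- Forward/backward lattice derivative in the signed direction `e`. -/
noncomputable def nabla (ε : ℝ) (e : Fin d × Bool) (f : Pt d → ℝ) (x : Pt d) : ℝ :=
  ε⁻¹ * (f (x + ε • sdir d e) - f x)

/-- Iterated lattice derivative. -/
noncomputable def nablaList (ε : ℝ) : List (Fin d × Bool) → (Pt d → ℝ) → Pt d → ℝ
  | [], f => f
  | e :: es, f => nabla ε e (nablaList ε es f)

/-- Lattice Laplacian `Δ_ε`. -/
noncomputable def latLap (ε : ℝ) (f : Pt d → ℝ) (x : Pt d) : ℝ :=
  ε⁻¹ ^ 2 * ∑ μ : Fin d,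
    (f (x + ε • (Pi.single μ 1 : Pt d)) + f (x - ε • (Pi.single μ 1 : Pt d)) - 2 * f x)

/-- Open cube of edge length `R` centered at `z` (sup-metric). -/
def cubeC (z : Pt d) (R : ℝ) : Set (Pt d) := {x | ∀ i, |x i - z i| < R / 2}

/-- `U_ε(R)` (centered at `z`). -/
def UC (ε : ℝ) (z : Pt d) (R : ℝ) : Set (Pt d) := cubeC z R ∩ latt d ε

/-- Lattice boundary `∂U_ε(R)` (centered at `z`). -/
def bdryC (ε : ℝ) (z : Pt d) (R : ℝ) : Set (Pt d) :=
  {y | y ∈ latt d ε ∧ y ∉ UC ε z R ∧ ∃ x ∈ UC ε z R, ‖x - y‖ = ε}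

/-- `Ū_ε(R) = U_ε(R) ∪ ∂U_ε(R)`. -/
def clC (ε : ℝ) (z : Pt d) (R : ℝ) : Set (Pt d) := UC ε z R ∪ bdryC ε z R

/-- `h` solves the lattice Dirichlet problem on the cube of edge `R` centered at `z`,
with mass `a` and boundary data `f`. -/
def IsDirSol (ε : ℝ) (z : Pt d) (R a : ℝ) (f h : Pt d → ℝ) : Prop :=
  (∀ x ∈ UC ε z R, a * h x - latLap ε h x = 0) ∧ ∀ x ∈ bdryC ε z R, h x = f x

/-- Lattice integral of `F` over the lattice points lying in `X` (`ℝ≥0∞`-valued). -/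
noncomputable def eint (ε : ℝ) (X : Set (Pt d)) (F : Pt d → ℝ) : ℝ≥0∞ :=
  ∑' k : Idx d, Set.indicator X (fun x => ENNReal.ofReal (ε ^ d * F x)) (toPt ε k)

/-- Squared lattice Sobolev norm `‖f‖²_{H_K(X_ε)}`. -/
noncomputable def sobSq (ε : ℝ) (K : ℕ) (X : Set (Pt d)) (f : Pt d → ℝ) : ℝ≥0∞ :=
  ∑ j ∈ Finset.range (K + 1), (2 : ℝ≥0∞)⁻¹ ^ j *
    ∑ es : Fin j → Fin d × Bool,
      eint ε X fun x => (nablaList ε (List.ofFn es) f x) ^ 2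

/-- Lattice Sobolev norm `‖f‖_{H_K(X_ε)}`. -/
noncomputable def sobNorm (ε : ℝ) (K : ℕ) (X : Set (Pt d)) (f : Pt d → ℝ) : ℝ≥0∞ :=
  sobSq ε K X f ^ (1/2 : ℝ)

/-- Real-valued lattice integral over the whole lattice. -/
noncomputable def lint (ε : ℝ) (F : Pt d → ℝ) : ℝ := ε ^ d * ∑' k : Idx d, F (toPt ε k)

/-- Squared weighted lattice Sobolev norm `‖f‖²_{φ,K}`. -/
noncomputable def wSobSq (ε : ℝ) (K : ℕ) (φ : Pt d → ℝ) (f : Pt d → ℝ) : ℝ≥0∞ :=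
  ∑ j ∈ Finset.range (K + 1), (2 : ℝ≥0∞)⁻¹ ^ j *
    ∑ es : Fin j → Fin d × Bool,
      ∑' k : Idx d, ENNReal.ofReal
        (ε ^ d * φ (toPt ε k) * (nablaList ε (List.ofFn es) f (toPt ε k)) ^ 2)

/-- Weighted lattice Sobolev norm `‖f‖_{φ,K}`. -/
noncomputable def wSobNorm (ε : ℝ) (K : ℕ) (φ : Pt d → ℝ) (f : Pt d → ℝ) : ℝ≥0∞ :=
  wSobSq ε K φ f ^ (1/2 : ℝ)


lemma latLap_comb (ε b c₁ c₂ : ℝ) (f₁ f₂ : Pt d → ℝ) (x : Pt d) :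
    latLap ε (fun y => b + c₁ * f₁ y + c₂ * f₂ y) x
      = c₁ * latLap ε f₁ x + c₂ * latLap ε f₂ x := by
  simp only [latLap, Finset.mul_sum, ← Finset.sum_add_distrib]
  exact Finset.sum_congr rfl fun μ _ => by ring

lemma coord_add_single (x : Pt d) (ε : ℝ) (μ i : Fin d) :
    (x + ε • (Pi.single μ 1 : Pt d)) i = x i + (if i = μ then ε else 0) := by
  simp [Pi.single_apply, mul_ite]

lemma coord_sub_single (x : Pt d) (ε : ℝ) (μ i : Fin d) :
    (x - ε • (Pi.single μ 1 : Pt d)) i = x i - (if i = μ then ε else 0) := by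
  simp [Pi.single_apply, mul_ite]

lemma latLap_q (hd : 1 ≤ d) {ε : ℝ} (hε : ε ≠ 0) (C : ℝ) (x : Pt d) :
    latLap ε (fun y => C - (y ⟨0, hd⟩)^2) x = -2 := by
  set i₀ : Fin d := ⟨0, hd⟩
  have key : ∀ μ : Fin d,
      ((C - ((x + ε • (Pi.single μ 1 : Pt d)) i₀)^2)
        + (C - ((x - ε • (Pi.single μ 1 : Pt d)) i₀)^2)
        - 2*(C - (x i₀)^2))
      = if i₀ = μ then -2*ε^2 else 0 := by
    intro μ
    rw [coord_add_single, coord_sub_single]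
    by_cases hμ : i₀ = μ <;> simp [hμ] <;> ring
  simp only [latLap]
  rw [Finset.sum_congr rfl fun μ _ => key μ, Finset.sum_ite_eq Finset.univ i₀
    (fun _ => -2*ε^2)]
  simp only [Finset.mem_univ, if_true]
  field_simp
lemma toPt_add_single {ε : ℝ} (k : Idx d) (μ : Fin d) :
    toPt ε k + ε • (Pi.single μ 1 : Pt d) = toPt ε (k + Pi.single μ 1) := by
  funext i
  simp only [toPt, Pi.add_apply, Pi.smul_apply, Pi.single_apply, smul_eq_mul]
  split_ifs <;> push_cast <;> ring

lemma toPt_sub_single {ε : ℝ} (k : Idx d) (μ : Fin d) :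
    toPt ε k - ε • (Pi.single μ 1 : Pt d) = toPt ε (k - Pi.single μ 1) := by
  funext i
  simp only [toPt, Pi.sub_apply, Pi.smul_apply, Pi.single_apply, smul_eq_mul]
  split_ifs <;> push_cast <;> ring

lemma norm_smul_single {ε : ℝ} (hε : 0 < ε) (μ : Fin d) :
    ‖ε • (Pi.single μ 1 : Pt d)‖ = ε := by
  rw [norm_smul, Pi.norm_single]
  simp [abs_of_pos hε]

/-- boundary points are within `R/2 + ε` of the center. -/
lemma bdry_coord_bound {ε R : ℝ} {y : Pt d} (hy : y ∈ bdryC ε (0 : Pt d) R) (i : Fin d) :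
    |y i| ≤ R / 2 + ε := by
  obtain ⟨-, -, x, hx, hxy⟩ := hy
  have h1 : |x i - y i| ≤ ε := by
    rw [← hxy]
    have := norm_le_pi_norm (x - y) i
    simpa [Real.norm_eq_abs] using this
  have h2 : |x i| < R / 2 := by simpa using hx.1 i
  calc |y i| = |x i - (x i - y i)| := by ring_nf
    _ ≤ |x i| + |x i - y i| := abs_sub _ _
    _ ≤ R / 2 + ε := by linarith

lemma clC_finite {ε : ℝ} (hε : 0 < ε) (R : ℝ) : (clC ε (0 : Pt d) R).Finite := by
  set M : ℤ := ⌈R / (2 * ε)⌉ + 1 with hM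
  have hsub : clC ε (0 : Pt d) R ⊆ toPt ε '' {k : Idx d | ∀ i, k i ∈ Set.Icc (-M) M} := by
    intro y hy
    have hlat : y ∈ latt d ε := by
      rcases hy with h | h
      · exact h.2
      · exact h.1
    obtain ⟨k, rfl⟩ := hlat
    refine ⟨k, fun i => ?_, rfl⟩
    have hbound : |toPt ε k i| ≤ R / 2 + ε := by
      rcases hy with h | h
      · have := h.1 i
        simp only [Pi.zero_apply, sub_zero] at this
        have : |toPt ε k i| < R / 2 := by simpa using this
        linarith
      · exact bdry_coord_bound h i
    have habs : ε * |(k i : ℝ)| ≤ R / 2 + ε := by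
      rw [show |toPt ε k i| = |ε * (k i : ℝ)| from rfl, abs_mul, abs_of_pos hε] at hbound
      exact hbound
    have h5 : |k i| ≤ M := by
      have h4 : |(k i : ℝ)| ≤ (M : ℝ) := by
        rw [← mul_le_mul_iff_right₀ hε]
        calc ε * |(k i : ℝ)| ≤ R / 2 + ε := habs
          _ = ε * (R / (2 * ε) + 1) := by field_simp
          _ ≤ ε * ((⌈R / (2 * ε)⌉ : ℝ) + 1) := by
              have := Int.le_ceil (R / (2 * ε)); gcongr
          _ = ε * (M : ℝ) := by rw [hM]; push_cast; ring
      exact_mod_cast h4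
    simpa [Set.mem_Icc] using abs_le.mp h5
  refine (Set.Finite.image _ ?_).subset hsub
  have : {k : Idx d | ∀ i, k i ∈ Set.Icc (-M) M} = Set.pi Set.univ (fun _ => Set.Icc (-M) M) := by
    ext k; simp only [Set.mem_univ_pi, Set.mem_setOf_eq]
  rw [this]
  exact Set.Finite.pi fun _ => Set.finite_Icc _ _

lemma neighbor_mem_clC (hd : 1 ≤ d) {ε R : ℝ} (hε : 0 < ε) {x : Pt d}
    (hx : x ∈ UC ε (0 : Pt d) R) (μ : Fin d) :
    x + ε • (Pi.single μ 1 : Pt d) ∈ clC ε (0 : Pt d) R ∧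
    x - ε • (Pi.single μ 1 : Pt d) ∈ clC ε (0 : Pt d) R := by
  obtain ⟨k, hk⟩ := hx.2
  constructor
  · have hylat : x + ε • (Pi.single μ 1 : Pt d) ∈ latt d ε :=
      ⟨k + Pi.single μ 1, by rw [← toPt_add_single, hk]⟩
    by_cases hyU : x + ε • (Pi.single μ 1 : Pt d) ∈ UC ε (0 : Pt d) R
    · exact Or.inl hyU
    · refine Or.inr ⟨hylat, hyU, x, hx, ?_⟩
      have h1 : x - (x + ε • (Pi.single μ 1 : Pt d)) = -(ε • (Pi.single μ 1 : Pt d)) := by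
        abel
      rw [h1, norm_neg, norm_smul_single hε]
  · have hylat : x - ε • (Pi.single μ 1 : Pt d) ∈ latt d ε :=
      ⟨k - Pi.single μ 1, by rw [← toPt_sub_single, hk]⟩
    by_cases hyU : x - ε • (Pi.single μ 1 : Pt d) ∈ UC ε (0 : Pt d) R
    · exact Or.inl hyU
    · refine Or.inr ⟨hylat, hyU, x, hx, ?_⟩
      have h1 : x - (x - ε • (Pi.single μ 1 : Pt d)) = ε • (Pi.single μ 1 : Pt d) := by
        abel
      rw [h1, norm_smul_single hε]

lemma maxPrin (hd : 1 ≤ d) {ε R a : ℝ} (hε : 0 < ε) (ha : 0 ≤ a)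
    (u : Pt d → ℝ)
    (hint : ∀ y ∈ UC ε (0 : Pt d) R, 0 < a * u y - latLap ε u y)
    (hbd : ∀ y ∈ bdryC ε (0 : Pt d) R, 0 ≤ u y) :
    ∀ x ∈ UC ε (0 : Pt d) R, 0 ≤ u x := by
  intro x hx
  have hfin := clC_finite (d := d) hε R
  have hne : (clC ε (0 : Pt d) R).Nonempty := ⟨x, Or.inl hx⟩
  obtain ⟨x₀, hx₀, hmin⟩ := Set.exists_min_image _ u hfin hne
  have hxmem : x ∈ clC ε (0 : Pt d) R := Or.inl hx
  rcases hx₀ with hU | hB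
  · have hlap : 0 ≤ latLap ε u x₀ := by
      apply mul_nonneg (by positivity)
      apply Finset.sum_nonneg
      intro μ _
      obtain ⟨hp, hm⟩ := neighbor_mem_clC hd hε hU μ
      have h1 := hmin _ hp
      have h2 := hmin _ hm
      linarith
    have h3 := hint x₀ hU
    have h5 : 0 < u x₀ := by
      by_contra hcon
      push_neg at hcon
      have := mul_nonpos_of_nonneg_of_nonpos ha hcon
      linarith
    linarith [hmin x hxmem]
  · linarith [hmin x hxmem, hbd x₀ hB]

set_option maxHeartbeats 1000000 in
/-- Lemma 4.1, bound on the defect of the lattice Poisson kernel. -/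
theorem poisson_kernel_defect (d : ℕ) (hd : 1 ≤ d) (p : ℕ) (hp : 1 ≤ p)
    (n m : ℕ) (hmn : m ≤ n) (a : ℝ) (ha : 0 ≤ a) (ε R : ℝ)
    (hεdef : ε = ((2 : ℝ) ^ p) ^ (-(n : ℤ)))
    (hRdef : R = ((2 : ℝ) ^ p) ^ (1 - (m : ℤ)))
    (h : Pt d → ℝ) (hsol : IsDirSol ε (0 : Pt d) R a (fun _ => 1) h) :
    ∀ x ∈ UC ε (0 : Pt d) R, 0 ≤ 1 - h x ∧ 1 - h x ≤ a * R ^ 2 / 2 := by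
  obtain ⟨hPDE, hBC⟩ := hsol
  have hLpos : (0 : ℝ) < 2 ^ p := by positivity
  have hL2 : (2 : ℝ) ≤ 2 ^ p := by
    calc (2 : ℝ) = 2 ^ 1 := (pow_one 2).symm
      _ ≤ 2 ^ p := pow_le_pow_right₀ one_le_two hp
  have hε : 0 < ε := by rw [hεdef]; positivity
  have hR : 0 < R := by rw [hRdef]; positivity
  have hεR : 2 * ε ≤ R := by
    rw [hεdef, hRdef]
    have h1 : ((2 : ℝ) ^ p) ^ (-(n : ℤ)) ≤ ((2 : ℝ) ^ p) ^ (-(m : ℤ)) :=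
      zpow_le_zpow_right₀ (by linarith) (by omega)
    calc 2 * ((2 : ℝ) ^ p) ^ (-(n : ℤ))
        ≤ ((2 : ℝ) ^ p) ^ (1 : ℤ) * ((2 : ℝ) ^ p) ^ (-(m : ℤ)) := by
          rw [zpow_one]
          apply mul_le_mul hL2 h1 (by positivity) (by positivity)
      _ = ((2 : ℝ) ^ p) ^ (1 - (m : ℤ)) := by
          rw [← zpow_add₀ (ne_of_gt hLpos)]
          ring_nf
  set i₀ : Fin d := ⟨0, hd⟩ with hi₀
  set C : ℝ := (R / 2 + ε) ^ 2 with hC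
  set q : Pt d → ℝ := fun y => C - (y i₀) ^ 2 with hq
  have hCpos : 0 < C := by positivity
  have hCR : C ≤ R ^ 2 := by nlinarith
  have hq_int : ∀ y ∈ UC ε (0 : Pt d) R, 0 ≤ q y := by
    intro y hy
    have h1 : |y i₀ - 0| < R / 2 := hy.1 i₀
    rw [sub_zero] at h1
    have h2 : (y i₀) ^ 2 ≤ (R / 2 + ε) ^ 2 := by nlinarith [abs_nonneg (y i₀), sq_abs (y i₀)]
    simpa [hq] using h2
  have hq_bd : ∀ y ∈ bdryC ε (0 : Pt d) R, 0 ≤ q y := by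
    intro y hy
    have h1 := bdry_coord_bound hy i₀
    have h2 : (y i₀) ^ 2 ≤ (R / 2 + ε) ^ 2 := by nlinarith [abs_nonneg (y i₀), sq_abs (y i₀)]
    simpa [hq] using h2
  have hq_le : ∀ y : Pt d, q y ≤ C := fun y => sub_le_self _ (sq_nonneg _)
  intro x hx
  have hC0 : C ≠ 0 := ne_of_gt hCpos
  -- lower bound: for all δ > 0, -(δ * C) ≤ 1 - h x
  have hlow : ∀ δ : ℝ, 0 < δ → -(δ * C) ≤ 1 - h x := by
    intro δ hδ
    have hkey := maxPrin hd hε ha (fun y => 1 + δ * q y + (-1) * h y) ?_ ?_ x hx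
    · have hqx := hq_le x
      have h1 : 0 ≤ 1 + δ * q x + (-1) * h x := hkey
      nlinarith [mul_le_mul_of_nonneg_left hqx hδ.le]
    · intro y hy
      have hlapq : latLap ε q y = -2 := latLap_q hd hε.ne' C y
      have hcomb := latLap_comb ε 1 δ (-1) q h y
      have hPDEy := hPDE y hy
      have hqy := hq_int y hy
      show 0 < a * (1 + δ * q y + (-1) * h y)
          - latLap ε (fun y => 1 + δ * q y + (-1) * h y) y
      rw [hcomb, hlapq]
      nlinarith [mul_nonneg (mul_nonneg ha hδ.le) hqy]
    · intro y hy
      have hby := hBC y hy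
      have hqy := hq_bd y hy
      show 0 ≤ 1 + δ * q y + (-1) * h y
      simp only at hby
      rw [hby]
      nlinarith [mul_nonneg hδ.le hqy]
  -- upper bound: for all δ > 0, 1 - h x ≤ (a/2 + δ) * C
  have hup : ∀ δ : ℝ, 0 < δ → 1 - h x ≤ (a / 2 + δ) * C := by
    intro δ hδ
    have hc : 0 ≤ a / 2 + δ := by linarith
    have hkey := maxPrin hd hε ha (fun y => (-1) + (a / 2 + δ) * q y + 1 * h y) ?_ ?_ x hx
    · have hqx := hq_le x
      have h1 : 0 ≤ (-1) + (a / 2 + δ) * q x + 1 * h x := hkey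
      nlinarith [mul_le_mul_of_nonneg_left hqx hc]
    · intro y hy
      have hlapq : latLap ε q y = -2 := latLap_q hd hε.ne' C y
      have hcomb := latLap_comb ε (-1) (a / 2 + δ) 1 q h y
      have hPDEy := hPDE y hy
      have hqy := hq_int y hy
      show 0 < a * ((-1) + (a / 2 + δ) * q y + 1 * h y)
          - latLap ε (fun y => (-1) + (a / 2 + δ) * q y + 1 * h y) y
      rw [hcomb, hlapq]
      nlinarith [mul_nonneg (mul_nonneg ha hc) hqy]
    · intro y hy
      have hby := hBC y hy
      have hqy := hq_bd y hy
      show 0 ≤ (-1) + (a / 2 + δ) * q y + 1 * h y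
      simp only at hby
      rw [hby]
      nlinarith [mul_nonneg hc hqy]
  clear hq_int hq_bd hq_le hq
  clear q
  clear_value C
  constructor
  · by_contra hcon
    push_neg at hcon
    have hδ : 0 < (h x - 1) / (2 * C) := div_pos (by linarith) (by linarith)
    have h1 := hlow _ hδ
    have h2 : (h x - 1) / (2 * C) * C = (h x - 1) / 2 := by
      field_simp
    rw [h2] at h1
    linarith
  · have hfin2 : 1 - h x ≤ a / 2 * C := by
      by_contra hcon
      push_neg at hcon
      have hδ : 0 < (1 - h x - a / 2 * C) / (2 * C) := div_pos (by linarith) (by linarith)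
      have h1 := hup _ hδ
      have h2 : (a / 2 + (1 - h x - a / 2 * C) / (2 * C)) * C
          = a / 2 * C + (1 - h x - a / 2 * C) / 2 := by
        field_simp
      rw [h2] at h1
      linarith
    nlinarith

end FRD
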